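/- arXiv:1809.04859 — 4 statements merged into one kernel-verified Lean document; each statement's English description precedes it below -/
import Mathlib

section
/- The sets Γ, Γ⁻¹ and R are closed subsets of X×X; the set of initial points 𝔞 and the set of final points 𝔟 are Borel subsets of X; and the transport set with end points 𝒯_e is σ-compact (a countable union of compact sets). -/
open Set MeasureTheory

variable {X : Type*}

/-- A geodesic parametrized on `[0,1]`. -/
def IsGeodesic [MetricSpace X] (γ : ℝ → X) : Prop :=
  ∀ s ∈ Set.Icc (0:ℝ) 1, ∀ t ∈ Set.Icc (0:ℝ) 1,
    dist (γ s) (γ t) = |s - t| * dist (γ 0) (γ 1)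

/-- `(X,d)` is a geodesic space. -/
def GeodesicSpace (X : Type*) [MetricSpace X] : Prop :=
  ∀ x y : X, ∃ γ : ℝ → X, IsGeodesic γ ∧ γ 0 = x ∧ γ 1 = y

/-- `Γ = {(x,y) : φ(x) - φ(y) = d(x,y)}`. -/
def Gamma [MetricSpace X] (φ : X → ℝ) : Set (X × X) :=
  {p | φ p.1 - φ p.2 = dist p.1 p.2}

/-- `Γ⁻¹`. -/
def GammaInv [MetricSpace X] (φ : X → ℝ) : Set (X × X) :=
  {p | (p.2, p.1) ∈ Gamma φ}

/-- The set of transport rays `R = Γ ∪ Γ⁻¹`. -/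
def Rays [MetricSpace X] (φ : X → ℝ) : Set (X × X) :=
  Gamma φ ∪ GammaInv φ

/-- `Γ(x)`. -/
def GammaOf [MetricSpace X] (φ : X → ℝ) (x : X) : Set X := {y | (x, y) ∈ Gamma φ}

/-- `Γ⁻¹(x)`. -/
def GammaInvOf [MetricSpace X] (φ : X → ℝ) (x : X) : Set X := {y | (x, y) ∈ GammaInv φ}

/-- `R(x) = Γ(x) ∪ Γ⁻¹(x)`. -/
def RayOf [MetricSpace X] (φ : X → ℝ) (x : X) : Set X := GammaOf φ x ∪ GammaInvOf φ x

/-- The transport set with end points `𝒯_e`. -/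
def Te [MetricSpace X] (φ : X → ℝ) : Set X :=
  (Prod.fst '' (Gamma φ \ {p : X × X | p.1 = p.2})) ∪
    (Prod.fst '' (GammaInv φ \ {p : X × X | p.1 = p.2}))

/-- The set of forward branching points `A₊`. -/
def Aplus [MetricSpace X] (φ : X → ℝ) : Set X :=
  {x | x ∈ Te φ ∧ ∃ z ∈ GammaOf φ x, ∃ w ∈ GammaOf φ x, (z, w) ∉ Rays φ}

/-- The set of backward branching points `A₋`. -/
def Aminus [MetricSpace X] (φ : X → ℝ) : Set X :=
  {x | x ∈ Te φ ∧ ∃ z ∈ GammaInvOf φ x, ∃ w ∈ GammaInvOf φ x, (z, w) ∉ Rays φ}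

/-- The transport set `𝒯 = 𝒯_e \ (A₊ ∪ A₋)`. -/
def Tset [MetricSpace X] (φ : X → ℝ) : Set X := Te φ \ (Aplus φ ∪ Aminus φ)

/-- The set of initial points `𝔞`. -/
def initialPoints [MetricSpace X] (φ : X → ℝ) : Set X :=
  {z | ¬ ∃ x : X, (x, z) ∈ Gamma φ ∧ 0 < dist x z}

/-- The set of final points `𝔟`. -/
def finalPoints [MetricSpace X] (φ : X → ℝ) : Set X :=
  {z | ¬ ∃ x : X, (z, x) ∈ Gamma φ ∧ 0 < dist x z}


lemma IsSigmaCompact.measurableSet' {Y : Type*} [TopologicalSpace Y] [T2Space Y]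
    [MeasurableSpace Y] [BorelSpace Y] {s : Set Y} (hs : IsSigmaCompact s) :
    MeasurableSet s := by
  obtain ⟨K, hK, rfl⟩ := hs
  exact MeasurableSet.iUnion fun n => (hK n).measurableSet

theorem stmt1 [MetricSpace X] [MeasurableSpace X] [BorelSpace X]
    (hproper : ProperSpace X) (hgeod : GeodesicSpace X)
    (φ : X → ℝ) (hφ : LipschitzWith 1 φ) :
    IsClosed (Gamma φ) ∧ IsClosed (GammaInv φ) ∧ IsClosed (Rays φ) ∧
      MeasurableSet (initialPoints φ) ∧ MeasurableSet (finalPoints φ) ∧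
      IsSigmaCompact (Te φ) := by
  haveI := hproper
  have hφc : Continuous φ := hφ.continuous
  have hG : IsClosed (Gamma φ) := by
    have : Continuous fun p : X × X => φ p.1 - φ p.2 :=
      (hφc.comp continuous_fst).sub (hφc.comp continuous_snd)
    exact isClosed_eq this continuous_dist
  have hGi : IsClosed (GammaInv φ) := hG.preimage (continuous_snd.prodMk continuous_fst)
  -- closed subsets of X × X are σ-compact
  have key : ∀ s : Set (X × X), IsClosed s → IsSigmaCompact s := fun s hs =>
    isSigmaCompact_univ.of_isClosed_subset hs (Set.subset_univ s)
  -- Γ minus an ε-neighborhood of the diagonal is closed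
  have hCn : ∀ n : ℕ, IsClosed (Gamma φ ∩ {p : X × X | 1 / (n + 1 : ℝ) ≤ dist p.1 p.2}) := by
    intro n
    exact hG.inter (isClosed_le continuous_const continuous_dist)
  have hsplit : (Gamma φ \ {p : X × X | p.1 = p.2}) =
      ⋃ n : ℕ, Gamma φ ∩ {p : X × X | 1 / (n + 1 : ℝ) ≤ dist p.1 p.2} := by
    ext p
    simp only [Set.mem_diff, Set.mem_setOf_eq, Set.mem_iUnion, Set.mem_inter_iff]
    constructor
    · rintro ⟨hp, hne⟩
      have hd : 0 < dist p.1 p.2 := dist_pos.2 fun h => hne h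
      obtain ⟨n, hn⟩ := exists_nat_one_div_lt hd
      exact ⟨n, hp, hn.le⟩
    · rintro ⟨n, hp, hn⟩
      refine ⟨hp, fun h => ?_⟩
      have : dist p.1 p.2 = 0 := by rw [h, dist_self]
      rw [this] at hn
      have : (0:ℝ) < 1 / (n + 1 : ℝ) := by positivity
      linarith
  have hsc1 : IsSigmaCompact (Gamma φ \ {p : X × X | p.1 = p.2}) := by
    rw [hsplit]; exact isSigmaCompact_iUnion _ fun n => key _ (hCn n)
  have hsc2 : IsSigmaCompact (GammaInv φ \ {p : X × X | p.1 = p.2}) := by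
    have : (GammaInv φ \ {p : X × X | p.1 = p.2}) =
        (fun p : X × X => (p.2, p.1)) '' (Gamma φ \ {p : X × X | p.1 = p.2}) := by
      ext p
      constructor
      · rintro ⟨hp, hne⟩
        exact ⟨(p.2, p.1), ⟨hp, fun h => hne h.symm⟩, rfl⟩
      · rintro ⟨q, ⟨hq, hne⟩, rfl⟩
        exact ⟨hq, fun h => hne h.symm⟩
    rw [this]
    exact hsc1.image (continuous_snd.prodMk continuous_fst)
  have hsc3 : IsSigmaCompact (Prod.snd '' (Gamma φ \ {p : X × X | p.1 = p.2})) :=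
    hsc1.image continuous_snd
  have hunion : ∀ s t : Set X, IsSigmaCompact s → IsSigmaCompact t → IsSigmaCompact (s ∪ t) := by
    intro s t hs ht
    rw [Set.union_eq_iUnion]
    exact isSigmaCompact_iUnion _ (fun b => by cases b <;> simpa)
  refine ⟨hG, hGi, hG.union hGi, ?_, ?_, ?_⟩
  · have hc : (initialPoints φ)ᶜ = Prod.snd '' (Gamma φ \ {p : X × X | p.1 = p.2}) := by
      ext z
      simp only [initialPoints, Set.mem_compl_iff, Set.mem_setOf_eq, not_not, Set.mem_image]
      constructor
      · rintro ⟨x, hx, hd⟩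
        refine ⟨(x, z), ⟨hx, fun h => ?_⟩, rfl⟩
        simp only [Set.mem_setOf_eq] at h
        subst h; simp at hd
      · rintro ⟨⟨x, z'⟩, ⟨hx, hne⟩, rfl⟩
        exact ⟨x, hx, dist_pos.2 fun h => hne h⟩
    have hm : MeasurableSet ((initialPoints φ)ᶜ) := by rw [hc]; exact hsc3.measurableSet'
    simpa using hm.compl
  · have hc : (finalPoints φ)ᶜ = Prod.fst '' (Gamma φ \ {p : X × X | p.1 = p.2}) := by
      ext z
      simp only [finalPoints, Set.mem_compl_iff, Set.mem_setOf_eq, not_not, Set.mem_image]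
      constructor
      · rintro ⟨x, hx, hd⟩
        refine ⟨(z, x), ⟨hx, fun h => ?_⟩, rfl⟩
        simp only [Set.mem_setOf_eq] at h
        subst h; simp at hd
      · rintro ⟨⟨z', x⟩, ⟨hx, hne⟩, rfl⟩
        exact ⟨x, hx, dist_pos.2 fun h => hne h.symm⟩
    have hm : MeasurableSet ((finalPoints φ)ᶜ) := by
      rw [hc]; exact (hsc1.image continuous_fst).measurableSet'
    simpa using hm.compl
  · exact hunion _ _ (hsc1.image continuous_fst) (hsc2.image continuous_fst)
end

section
/- The set of transport rays R is an equivalence relation on 𝒯_e \ (A₊ ∪ A₋): (x,x) ∈ R for every x ∈ 𝒯_e; (x,y) ∈ R implies (y,x) ∈ R; and for all x,z,w ∈ 𝒯_e \ (A₊ ∪ A₋), if (x,z) ∈ R and (z,w) ∈ R then (x,w) ∈ R. -/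
open Set MeasureTheory

variable {X : Type*}

lemma gamma_trans [MetricSpace X] {φ : X → ℝ} (hφ : LipschitzWith 1 φ)
    {a b c : X} (h1 : (a, b) ∈ Gamma φ) (h2 : (b, c) ∈ Gamma φ) :
    (a, c) ∈ Gamma φ := by
  simp only [Gamma, Set.mem_setOf_eq] at *
  have hle : φ a - φ c ≤ dist a c := by
    have := hφ.dist_le_mul a c
    rw [Real.dist_eq, NNReal.coe_one, one_mul] at this
    exact (abs_le.mp this).2 |>.trans_eq rfl |>.trans (le_refl _) |>.trans (by
      exact le_of_eq rfl)
  have hge : dist a c ≤ φ a - φ c := by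
    calc dist a c ≤ dist a b + dist b c := dist_triangle a b c
      _ = (φ a - φ b) + (φ b - φ c) := by rw [h1, h2]
      _ = φ a - φ c := by ring
  linarith

theorem stmt3 [MetricSpace X]
    (hproper : ProperSpace X) (hgeod : GeodesicSpace X)
    (φ : X → ℝ) (hφ : LipschitzWith 1 φ) :
    (∀ x ∈ Te φ, (x, x) ∈ Rays φ) ∧
    (∀ x y : X, (x, y) ∈ Rays φ → (y, x) ∈ Rays φ) ∧
    (∀ x ∈ Te φ \ (Aplus φ ∪ Aminus φ), ∀ z ∈ Te φ \ (Aplus φ ∪ Aminus φ),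
      ∀ w ∈ Te φ \ (Aplus φ ∪ Aminus φ),
        (x, z) ∈ Rays φ → (z, w) ∈ Rays φ → (x, w) ∈ Rays φ) := by
  refine ⟨?_, ?_, ?_⟩
  · intro x _
    left
    simp [Gamma]
  · rintro x y (h | h)
    · exact Or.inr h
    · exact Or.inl h
  · rintro x ⟨_, _⟩ z ⟨hzTe, hzA⟩ w ⟨_, _⟩ hxz hzw
    simp only [Set.mem_union, not_or] at hzA
    obtain ⟨hzp, hzm⟩ := hzA
    rcases hxz with h1 | h1 <;> rcases hzw with h2 | h2
    · exact Or.inl (gamma_trans hφ h1 h2)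
    · -- (x,z) ∈ Γ, (w,z) ∈ Γ : x, w ∈ Γ⁻¹(z), use z ∉ A₋
      by_contra hc
      exact hzm ⟨hzTe, x, h1, w, h2, hc⟩
    · -- (z,x) ∈ Γ, (z,w) ∈ Γ : x, w ∈ Γ(z), use z ∉ A₊
      by_contra hc
      exact hzp ⟨hzTe, x, h1, w, h2, hc⟩
    · exact Or.inr (gamma_trans hφ h2 h1)
end

section
/- Let Δ ⊂ Γ be any set such that for all (x₀,y₀),(x₁,y₁) ∈ Δ it holds (φ(y₁) − φ(y₀))·(φ(x₁) − φ(x₀)) ≥ 0. Then Δ is d²-cyclically monotone. -/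
open Set MeasureTheory

variable {X : Type*}

/-- `d²`-cyclical monotonicity. -/
def CyclMono2 [MetricSpace X] (Λ : Set (X × X)) : Prop :=
  ∀ (n : ℕ) (p : Fin (n + 1) → X × X), (∀ i, p i ∈ Λ) →
    ∑ i, dist (p i).1 (p i).2 ^ 2 ≤ ∑ i, dist (p i).1 (p (i + 1)).2 ^ 2

theorem stmt5 [MetricSpace X]
    (φ : X → ℝ) (hφ : LipschitzWith 1 φ)
    (Δ : Set (X × X)) (hΔ : Δ ⊆ Gamma φ)
    (hmono : ∀ p ∈ Δ, ∀ q ∈ Δ, 0 ≤ (φ q.2 - φ p.2) * (φ q.1 - φ p.1)) :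
    CyclMono2 Δ := by
  intro n p hp
  set a : Fin (n+1) → ℝ := fun i => φ (p i).1 with ha
  set b : Fin (n+1) → ℝ := fun i => φ (p i).2 with hb
  have hd : ∀ i, dist (p i).1 (p i).2 = a i - b i := fun i => (hΔ (hp i)).symm
  have hmon : Monovary a b := by
    intro i j hbij
    by_contra h
    push_neg at h
    have := hmono _ (hp j) _ (hp i)
    simp only [ha, hb] at *
    nlinarith
  have key : ∑ i, a i * b (i+1) ≤ ∑ i, a i * b i := by
    have := hmon.sum_mul_comp_perm_le_sum_mul (σ := Equiv.addRight (1 : Fin (n+1)))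
    simpa using this
  have hsq : ∑ i, (b (i+1))^2 = ∑ i, (b i)^2 := by
    have := Equiv.sum_comp (Equiv.addRight (1 : Fin (n+1))) (fun i => (b i)^2)
    simpa using this
  have hle : ∀ i : Fin (n+1), (a i - b (i+1))^2 ≤ dist (p i).1 (p (i+1)).2 ^ 2 := by
    intro i
    have h1 : |a i - b (i+1)| ≤ dist (p i).1 (p (i+1)).2 := by
      have h2 := hφ.dist_le_mul (p i).1 (p (i+1)).2
      rw [Real.dist_eq] at h2
      simpa using h2
    nlinarith [abs_nonneg (a i - b (i+1)), sq_abs (a i - b (i+1))]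
  have expand : ∀ c : Fin (n+1) → ℝ,
      ∑ i, (a i - c i)^2 = ∑ i, (a i)^2 - 2 * ∑ i, a i * c i + ∑ i, (c i)^2 := by
    intro c
    rw [Finset.mul_sum, ← Finset.sum_sub_distrib, ← Finset.sum_add_distrib]
    congr 1; ext i; ring
  calc ∑ i, dist (p i).1 (p i).2 ^ 2 = ∑ i, (a i - b i)^2 := by
        simp only [hd]
    _ ≤ ∑ i, (a i - b (i+1))^2 := by
        have e1 := expand b
        have e2 := expand (fun i => b (i+1))
        beta_reduce at e2
        linarith
    _ ≤ ∑ i, dist (p i).1 (p (i+1)).2 ^ 2 := Finset.sum_le_sum fun i _ => hle i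
end

section
/- Let x ∈ A₊. Then there exist two non-constant geodesics γ¹, γ² ∈ G such that: (x, γ¹_s) ∈ Γ and (x, γ²_s) ∈ Γ for all s ∈ [0,1]; (γ¹_s, γ²_s) ∉ R for all s ∈ [0,1]; and φ(γ¹_s) = φ(γ²_s) for all s ∈ [0,1]. -/
open Set MeasureTheory

variable {X : Type*}

section Aux
variable [MetricSpace X] {φ : X → ℝ}

lemma lip_sub_le (hφ : LipschitzWith 1 φ) (a b : X) : φ a - φ b ≤ dist a b := by
  have h := hφ.dist_le_mul a b
  rw [Real.dist_eq, NNReal.coe_one, one_mul] at h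
  exact (le_abs_self _).trans h

lemma geod_seg (hφ : LipschitzWith 1 φ) {γ : ℝ → X} (hγ : IsGeodesic γ)
    (hend : (γ 0, γ 1) ∈ Gamma φ) {s t : ℝ} (hs0 : 0 ≤ s) (hst : s ≤ t) (ht1 : t ≤ 1) :
    (γ s, γ t) ∈ Gamma φ ∧ φ (γ s) = φ (γ 0) - s * dist (γ 0) (γ 1) := by
  have hs : s ∈ Icc (0:ℝ) 1 := ⟨hs0, hst.trans ht1⟩
  have ht : t ∈ Icc (0:ℝ) 1 := ⟨hs0.trans hst, ht1⟩
  have h0 : (0:ℝ) ∈ Icc (0:ℝ) 1 := ⟨le_rfl, zero_le_one⟩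
  have h1 : (1:ℝ) ∈ Icc (0:ℝ) 1 := ⟨zero_le_one, le_rfl⟩
  set d := dist (γ 0) (γ 1) with hd
  have e1 : dist (γ 0) (γ s) = s * d := by
    have h := hγ 0 h0 s hs
    rwa [zero_sub, abs_neg, abs_of_nonneg hs0] at h
  have e2 : dist (γ s) (γ t) = (t - s) * d := by
    have h := hγ s hs t ht
    rwa [abs_of_nonpos (by linarith : s - t ≤ 0), neg_sub] at h
  have e3 : dist (γ t) (γ 1) = (1 - t) * d := by
    have h := hγ t ht 1 h1
    rwa [abs_of_nonpos (by linarith : t - 1 ≤ 0), neg_sub] at h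
  have l1 := lip_sub_le hφ (γ 0) (γ s)
  have l2 := lip_sub_le hφ (γ s) (γ t)
  have l3 := lip_sub_le hφ (γ t) (γ 1)
  have hsum : φ (γ 0) - φ (γ 1) = d := hend
  rw [e1] at l1; rw [e2] at l2; rw [e3] at l3
  constructor
  · show φ (γ s) - φ (γ t) = dist (γ s) (γ t)
    rw [e2]; linarith
  · linarith

lemma geod_reparam {γ : ℝ → X} (hγ : IsGeodesic γ) {a : ℝ} (ha0 : 0 ≤ a) (ha1 : a ≤ 1) :
    IsGeodesic (fun u => γ (a + u * (1 - a))) := by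
  intro s hs t ht
  obtain ⟨hs0, hs1⟩ := hs
  obtain ⟨ht0, ht1⟩ := ht
  have hmem : ∀ u : ℝ, 0 ≤ u → u ≤ 1 → a + u * (1 - a) ∈ Icc (0:ℝ) 1 := by
    intro u hu0 hu1
    constructor <;> nlinarith
  have key := hγ _ (hmem s hs0 hs1) _ (hmem t ht0 ht1)
  have e01 : dist (γ a) (γ 1) = (1 - a) * dist (γ 0) (γ 1) := by
    have h := hγ a ⟨ha0, ha1⟩ 1 ⟨zero_le_one, le_rfl⟩
    rwa [abs_of_nonpos (by linarith : a - 1 ≤ 0), neg_sub] at h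
  show dist (γ (a + s * (1 - a))) (γ (a + t * (1 - a)))
      = |s - t| * dist (γ (a + 0 * (1 - a))) (γ (a + 1 * (1 - a)))
  rw [key, show a + 0 * (1 - a) = a by ring, show a + 1 * (1 - a) = 1 by ring, e01,
    show a + s * (1 - a) - (a + t * (1 - a)) = (s - t) * (1 - a) by ring, abs_mul,
    abs_of_nonneg (by linarith : (0:ℝ) ≤ 1 - a)]
  ring

lemma geod_continuousOn {γ : ℝ → X} (hγ : IsGeodesic γ) : ContinuousOn γ (Icc 0 1) := by
  have h : LipschitzOnWith (Real.toNNReal (dist (γ 0) (γ 1))) γ (Icc 0 1) := by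
    apply LipschitzOnWith.of_dist_le_mul
    intro s hs t ht
    rw [hγ s hs t ht, Real.dist_eq, Real.coe_toNNReal _ dist_nonneg, mul_comm]
  exact h.continuousOn

lemma branch_key (hgeod : GeodesicSpace X) (hφ : LipschitzWith 1 φ)
    (x z w : X) (hz : (x, z) ∈ Gamma φ) (hw : (x, w) ∈ Gamma φ)
    (hzw : (z, w) ∉ Rays φ) (hle : φ z ≤ φ w) :
    ∃ γ₁ γ₂ : ℝ → X, IsGeodesic γ₁ ∧ IsGeodesic γ₂ ∧
      (γ₁ 0, γ₁ 1) ∈ Gamma φ ∧ (γ₂ 0, γ₂ 1) ∈ Gamma φ ∧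
      γ₁ 0 ≠ γ₁ 1 ∧ γ₂ 0 ≠ γ₂ 1 ∧
      (∀ s ∈ Set.Icc (0:ℝ) 1, (x, γ₁ s) ∈ Gamma φ ∧ (x, γ₂ s) ∈ Gamma φ) ∧
      (∀ s ∈ Set.Icc (0:ℝ) 1, (γ₁ s, γ₂ s) ∉ Rays φ) ∧
      (∀ s ∈ Set.Icc (0:ℝ) 1, φ (γ₁ s) = φ (γ₂ s)) := by
  -- basic facts
  have hdz : φ x - φ z = dist x z := hz
  have hdw : φ x - φ w = dist x w := hw
  have hxz : x ≠ z := by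
    rintro rfl; exact hzw (Or.inl hw)
  have hxw : x ≠ w := by
    rintro rfl; exact hzw (Or.inr hz)
  have hφz : φ z < φ x := by
    have := dist_pos.mpr hxz; linarith
  have hφw : φ w < φ x := by
    have := dist_pos.mpr hxw; linarith
  -- point z' at level φ w on a geodesic from x to z
  obtain ⟨ζ, hζ, hζ0, hζ1⟩ := hgeod x z
  set σ : ℝ := (φ x - φ w) / (φ x - φ z) with hσdef
  have hσ0 : 0 ≤ σ := div_nonneg (by linarith) (by linarith)
  have hσ1 : σ ≤ 1 := (div_le_one (by linarith)).mpr (by linarith)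
  have hζend : (ζ 0, ζ 1) ∈ Gamma φ := by rw [hζ0, hζ1]; exact hz
  have hseg1 := geod_seg hφ hζ hζend le_rfl hσ0 hσ1
  have hseg2 := geod_seg hφ hζ hζend hσ0 hσ1 le_rfl
  set z' : X := ζ σ with hz'def
  have hz' : (x, z') ∈ Gamma φ := by rw [← hζ0]; exact hseg1.1
  have hz'z : (z', z) ∈ Gamma φ := by rw [← hζ1]; exact hseg2.1
  have hφz' : φ z' = φ w := by
    have h := hseg2.2
    rw [hζ0, hζ1, ← hdz, hσdef, div_mul_cancel₀ _ (by linarith : φ x - φ z ≠ 0)] at h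
    rw [h]; ring
  have hz'w : z' ≠ w := by
    intro h
    exact hzw (Or.inr (show (w, z) ∈ Gamma φ by rw [← h]; exact hz'z))
  -- geodesics to z' and w
  obtain ⟨α, hα, hα0, hα1⟩ := hgeod x z'
  obtain ⟨β, hβ, hβ0, hβ1⟩ := hgeod x w
  set L : ℝ := φ x - φ w with hLdef
  have hL : 0 < L := by linarith
  have hαend : (α 0, α 1) ∈ Gamma φ := by rw [hα0, hα1]; exact hz'
  have hβend : (β 0, β 1) ∈ Gamma φ := by rw [hβ0, hβ1]; exact hw
  have hdα : dist (α 0) (α 1) = L := by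
    rw [hα0, hα1]
    have : φ x - φ z' = dist x z' := hz'
    rw [← this, hφz']
  have hdβ : dist (β 0) (β 1) = L := by rw [hβ0, hβ1, ← hdw]
  have hφα : ∀ t : ℝ, 0 ≤ t → t ≤ 1 → φ (α t) = φ x - t * L := by
    intro t ht0 ht1
    have h := (geod_seg hφ hα hαend ht0 le_rfl ht1).2
    rwa [hdα, hα0] at h
  have hφβ : ∀ t : ℝ, 0 ≤ t → t ≤ 1 → φ (β t) = φ x - t * L := by
    intro t ht0 ht1
    have h := (geod_seg hφ hβ hβend ht0 le_rfl ht1).2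
    rwa [hdβ, hβ0] at h
  -- last branching time
  set S : Set ℝ := Icc (0:ℝ) 1 ∩ (fun s => dist (α s) (β s)) ⁻¹' {0} with hSdef
  have h0S : (0:ℝ) ∈ S := by
    constructor
    · exact ⟨le_rfl, zero_le_one⟩
    · show dist (α 0) (β 0) = 0
      rw [hα0, hβ0, dist_self]
  have hF : ContinuousOn (fun s => dist (α s) (β s)) (Icc (0:ℝ) 1) :=
    show ContinuousOn ((fun p : X × X => dist p.1 p.2) ∘ (fun s => (α s, β s))) (Icc (0:ℝ) 1) from
    continuous_dist.comp_continuousOn ((geod_continuousOn hα).prodMk (geod_continuousOn hβ))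
  have hScl : IsClosed S :=
    ContinuousOn.preimage_isClosed_of_isClosed hF isClosed_Icc isClosed_singleton
  have hSbdd : BddAbove S := ⟨1, fun s hs => hs.1.2⟩
  set s₀ : ℝ := sSup S with hs₀def
  have hs₀S : s₀ ∈ S := hScl.csSup_mem ⟨0, h0S⟩ hSbdd
  have hs₀0 : 0 ≤ s₀ := hs₀S.1.1
  have hs₀1 : s₀ < 1 := by
    rcases lt_or_eq_of_le hs₀S.1.2 with h | h
    · exact h
    · exfalso
      have hd : dist (α s₀) (β s₀) = 0 := hs₀S.2
      rw [h] at hd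
      rw [hα1, hβ1] at hd
      exact hz'w (dist_eq_zero.mp hd)
  set a : ℝ := (s₀ + 1) / 2 with hadef
  have ha0 : 0 ≤ a := by rw [hadef]; linarith
  have ha1 : a ≤ 1 := by rw [hadef]; linarith
  have hsa : s₀ < a := by rw [hadef]; linarith
  have ha1' : a < 1 := by rw [hadef]; linarith
  -- parameter membership
  have htmem : ∀ s : ℝ, s ∈ Icc (0:ℝ) 1 →
      0 ≤ a + s * (1 - a) ∧ a + s * (1 - a) ≤ 1 ∧ a ≤ a + s * (1 - a) := by
    rintro s ⟨hs0, hs1⟩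
    refine ⟨by nlinarith, by nlinarith, by nlinarith⟩
  -- φ values agree
  have hφeq : ∀ s ∈ Icc (0:ℝ) 1, φ (α (a + s * (1 - a))) = φ (β (a + s * (1 - a))) := by
    intro s hs
    obtain ⟨h1, h2, _⟩ := htmem s hs
    rw [hφα _ h1 h2, hφβ _ h1 h2]
  refine ⟨fun u => α (a + u * (1 - a)), fun u => β (a + u * (1 - a)),
    geod_reparam hα ha0 ha1, geod_reparam hβ ha0 ha1, ?_, ?_, ?_, ?_, ?_, ?_, ?_⟩
  · show (α (a + 0 * (1 - a)), α (a + 1 * (1 - a))) ∈ Gamma φ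
    rw [show a + 0 * (1 - a) = a by ring, show a + 1 * (1 - a) = 1 by ring]
    exact (geod_seg hφ hα hαend ha0 ha1 le_rfl).1
  · show (β (a + 0 * (1 - a)), β (a + 1 * (1 - a))) ∈ Gamma φ
    rw [show a + 0 * (1 - a) = a by ring, show a + 1 * (1 - a) = 1 by ring]
    exact (geod_seg hφ hβ hβend ha0 ha1 le_rfl).1
  · show α (a + 0 * (1 - a)) ≠ α (a + 1 * (1 - a))
    rw [show a + 0 * (1 - a) = a by ring, show a + 1 * (1 - a) = 1 by ring]
    intro h
    have hdd := hα a ⟨ha0, ha1⟩ 1 ⟨zero_le_one, le_rfl⟩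
    rw [h, dist_self, hdα, abs_of_nonpos (by linarith : a - 1 ≤ 0), neg_sub] at hdd
    nlinarith
  · show β (a + 0 * (1 - a)) ≠ β (a + 1 * (1 - a))
    rw [show a + 0 * (1 - a) = a by ring, show a + 1 * (1 - a) = 1 by ring]
    intro h
    have hdd := hβ a ⟨ha0, ha1⟩ 1 ⟨zero_le_one, le_rfl⟩
    rw [h, dist_self, hdβ, abs_of_nonpos (by linarith : a - 1 ≤ 0), neg_sub] at hdd
    nlinarith
  · intro s hs
    obtain ⟨h1, h2, _⟩ := htmem s hs
    constructor
    · have h := (geod_seg hφ hα hαend le_rfl h1 h2).1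
      rwa [hα0] at h
    · have h := (geod_seg hφ hβ hβend le_rfl h1 h2).1
      rwa [hβ0] at h
  · intro s hs hR
    obtain ⟨h1, h2, h3⟩ := htmem s hs
    have heq : α (a + s * (1 - a)) = β (a + s * (1 - a)) := by
      have hp := hφeq s hs
      rcases hR with h | h
      · have hd : φ (α (a + s * (1 - a))) - φ (β (a + s * (1 - a))) = _ := h
        rw [hp, sub_self] at hd
        exact dist_eq_zero.mp hd.symm
      · have hd : φ (β (a + s * (1 - a))) - φ (α (a + s * (1 - a))) = _ := h
        rw [hp, sub_self] at hd
        exact (dist_eq_zero.mp hd.symm).symm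
    have hmemS : a + s * (1 - a) ∈ S :=
      ⟨⟨h1, h2⟩, show dist _ _ = 0 by rw [heq, dist_self]⟩
    have := le_csSup hSbdd hmemS
    linarith
  · exact hφeq

end Aux

theorem stmt6 [MetricSpace X]
    (hproper : ProperSpace X) (hgeod : GeodesicSpace X)
    (φ : X → ℝ) (hφ : LipschitzWith 1 φ)
    (x : X) (hx : x ∈ Aplus φ) :
    ∃ γ₁ γ₂ : ℝ → X, IsGeodesic γ₁ ∧ IsGeodesic γ₂ ∧
      (γ₁ 0, γ₁ 1) ∈ Gamma φ ∧ (γ₂ 0, γ₂ 1) ∈ Gamma φ ∧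
      γ₁ 0 ≠ γ₁ 1 ∧ γ₂ 0 ≠ γ₂ 1 ∧
      (∀ s ∈ Set.Icc (0:ℝ) 1, (x, γ₁ s) ∈ Gamma φ ∧ (x, γ₂ s) ∈ Gamma φ) ∧
      (∀ s ∈ Set.Icc (0:ℝ) 1, (γ₁ s, γ₂ s) ∉ Rays φ) ∧
      (∀ s ∈ Set.Icc (0:ℝ) 1, φ (γ₁ s) = φ (γ₂ s)) := by
  obtain ⟨hxTe, z, hz, w, hw, hzw⟩ := hx
  rcases le_total (φ z) (φ w) with h | h
  · exact branch_key hgeod hφ x z w hz hw hzw h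
  · refine branch_key hgeod hφ x w z hw hz ?_ h
    intro hR
    rcases hR with h' | h'
    · exact hzw (Or.inr h')
    · exact hzw (Or.inl h')
end
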